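/- For every real α with 0 < α < π/2 and every real x with 0 < x < sin α, one has cos α · arcsin( x / sin α ) < arcsin( x·cos α / (sin α · √(1 − x²)) ). (Equivalently, the paper's function δτ̂(x, 0) = cos α·arcsin(x·csc α) − arcsin(x·cot α/√(1−x²)) is strictly negative: free evolution between two symmetric points at height x is slower than the pair of bang arcs through their antipodal equatorial junction, proving Lemma 1 of the paper in the case r′_z = 0.) -/

import Mathlib

open Real

lemma tan_key (c : ℝ) (hc0 : 0 < c) (hc1 : c < 1) {θ : ℝ} (hθ0 : 0 < θ)
    (hθ1 : θ < π / 2) :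
    Real.sin (c * θ) * Real.cos θ < c * Real.sin θ * Real.cos (c * θ) := by
  set f : ℝ → ℝ := fun y => c * Real.sin y * Real.cos (c * y) - Real.sin (c * y) * Real.cos y
    with hf
  have hder : ∀ y : ℝ, HasDerivAt f ((1 - c ^ 2) * Real.sin (c * y) * Real.sin y) y := by
    intro y
    have hcy : HasDerivAt (fun y : ℝ => c * y) c y := by
      simpa using (hasDerivAt_id y).const_mul c
    have h1 : HasDerivAt (fun y => Real.cos (c * y)) (-Real.sin (c * y) * c) y :=
      (Real.hasDerivAt_cos (c * y)).comp y hcy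
    have h2 : HasDerivAt (fun y => Real.sin (c * y)) (Real.cos (c * y) * c) y :=
      (Real.hasDerivAt_sin (c * y)).comp y hcy
    have h3 : HasDerivAt (fun y => c * Real.sin y) (c * Real.cos y) y :=
      (Real.hasDerivAt_sin y).const_mul c
    have h4 := (h3.mul h1).sub (h2.mul (Real.hasDerivAt_cos y))
    refine h4.congr_deriv ?_
    ring
  have hmono : StrictMonoOn f (Set.Icc 0 (π / 2)) := by
    apply strictMonoOn_of_deriv_pos (convex_Icc 0 (π / 2))
    · exact (Continuous.sub ((continuous_const.mul Real.continuous_sin).mul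
        (Real.continuous_cos.comp (continuous_const.mul continuous_id)))
        ((Real.continuous_sin.comp (continuous_const.mul continuous_id)).mul
        Real.continuous_cos)).continuousOn
    · intro y hy
      rw [interior_Icc] at hy
      rw [(hder y).deriv]
      have hy0 : 0 < y := hy.1
      have hy1 : y < π / 2 := hy.2
      have hpi := Real.pi_pos
      have hs1 : 0 < Real.sin y := Real.sin_pos_of_pos_of_lt_pi hy0 (by linarith)
      have hs2 : 0 < Real.sin (c * y) := by
        apply Real.sin_pos_of_pos_of_lt_pi (by positivity)
        nlinarith
      have := mul_pos (mul_pos (show (0:ℝ) < 1 - c ^ 2 by nlinarith) hs2) hs1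
      linarith
  have h0 : f 0 < f θ := by
    have hpi := Real.pi_pos
    exact hmono (Set.mem_Icc.mpr ⟨le_refl 0, by positivity⟩)
      (Set.mem_Icc.mpr ⟨hθ0.le, hθ1.le⟩) hθ0
  simp only [hf, mul_zero, Real.sin_zero, Real.cos_zero, zero_mul, sub_zero,
    zero_sub, mul_one] at h0
  linarith

set_option maxHeartbeats 1000000 in
/-- Lemma 1 of the paper in the case `r′_z = 0`: free evolution between two symmetric
points at height `x` is slower than the pair of bang arcs through their antipodal
equatorial junction, i.e. `δτ̂(x,0) < 0`. -/
theorem free_evolution_slower (α x : ℝ) (hα₀ : 0 < α) (hα₁ : α < π / 2)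
    (hx₀ : 0 < x) (hx₁ : x < Real.sin α) :
    Real.cos α * arcsin (x / Real.sin α) <
      arcsin (x * Real.cos α / (Real.sin α * Real.sqrt (1 - x ^ 2))) := by
  have hpi := Real.pi_pos
  have hs : 0 < Real.sin α := Real.sin_pos_of_pos_of_lt_pi hα₀ (by linarith)
  have hc : 0 < Real.cos α := Real.cos_pos_of_mem_Ioo ⟨by linarith, hα₁⟩
  have hsc := Real.sin_sq_add_cos_sq α
  have hc1 : Real.cos α < 1 := by
    have := Real.cos_lt_cos_of_nonneg_of_le_pi (le_refl 0) (by linarith) hα₀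
    simpa using this
  set c := Real.cos α with hcdef
  set s := Real.sin α with hsdef
  have ht0 : 0 < x / s := div_pos hx₀ hs
  have ht1 : x / s < 1 := (div_lt_one hs).mpr hx₁
  set θ := arcsin (x / s) with hθdef
  have hθ0 : 0 < θ := Real.arcsin_pos.mpr ht0
  have hθ1 : θ < π / 2 := Real.arcsin_lt_pi_div_two.mpr ht1
  have hsinθ : Real.sin θ = x / s := Real.sin_arcsin (by linarith) ht1.le
  have hxeq : x = s * Real.sin θ := by rw [hsinθ]; field_simp
  have hsinθ0 : 0 < Real.sin θ := by rw [hsinθ]; exact ht0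
  have hcosθ0 : 0 < Real.cos θ := Real.cos_pos_of_mem_Ioo ⟨by linarith, hθ1⟩
  have hpyθ := Real.sin_sq_add_cos_sq θ
  have hpycθ := Real.sin_sq_add_cos_sq (c * θ)
  have hkey := tan_key c hc hc1 hθ0 hθ1
  have hcθθ : c * θ < θ := by
    have h := mul_lt_mul_of_pos_right hc1 hθ0
    simpa using h
  have hcθ0 : 0 < c * θ := mul_pos hc hθ0
  have hsincθ0 : 0 < Real.sin (c * θ) :=
    Real.sin_pos_of_pos_of_lt_pi hcθ0 (by linarith)
  have hcoscθ0 : 0 < Real.cos (c * θ) :=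
    Real.cos_pos_of_mem_Ioo ⟨by linarith, by linarith⟩
  have h1x : 1 - x ^ 2 = Real.cos θ ^ 2 + c ^ 2 * Real.sin θ ^ 2 := by
    rw [hxeq]
    linear_combination (- Real.sin θ ^ 2) * hsc - hpyθ
  have h1x0 : 0 < 1 - x ^ 2 := by rw [h1x]; positivity
  have hsq0 : 0 < Real.sqrt (1 - x ^ 2) := Real.sqrt_pos.mpr h1x0
  have hsqsq : Real.sqrt (1 - x ^ 2) ^ 2 = 1 - x ^ 2 := Real.sq_sqrt h1x0.le
  set A := x * c / (s * Real.sqrt (1 - x ^ 2)) with hAdef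
  have hA0 : 0 < A := by positivity
  -- key squared inequality: sin(cθ)^2 * (1 - x^2) < c^2 * sin θ ^ 2
  have hsqkey : Real.sin (c * θ) ^ 2 * (1 - x ^ 2) < c ^ 2 * Real.sin θ ^ 2 := by
    have hsq : (Real.sin (c * θ) * Real.cos θ) ^ 2
        < (c * Real.sin θ * Real.cos (c * θ)) ^ 2 := by
      apply pow_lt_pow_left₀ hkey (by positivity) (by norm_num)
    have e1 : Real.sin (c * θ) ^ 2 * (Real.cos θ ^ 2 + c ^ 2 * Real.sin θ ^ 2)
        = (Real.sin (c * θ) * Real.cos θ) ^ 2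
          + (c * Real.sin θ) ^ 2 * Real.sin (c * θ) ^ 2 := by ring
    have e2 : c ^ 2 * Real.sin θ ^ 2
        = (c * Real.sin θ * Real.cos (c * θ)) ^ 2
          + (c * Real.sin θ) ^ 2 * Real.sin (c * θ) ^ 2 := by
      linear_combination (-(c * Real.sin θ) ^ 2) * hpycθ
    rw [h1x]
    linarith [hsq, e1, e2]
  have hx2 : x ^ 2 = s ^ 2 * Real.sin θ ^ 2 := by rw [hxeq]; ring
  have hAmul : A * (s * Real.sqrt (1 - x ^ 2)) = x * c := by
    rw [hAdef]; field_simp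
  have h2 : A ^ 2 * (s ^ 2 * (1 - x ^ 2)) = x ^ 2 * c ^ 2 := by
    have h := congrArg (fun t => t ^ 2) hAmul
    simp only [mul_pow] at h
    rw [hsqsq] at h
    linear_combination h
  have hAsq : A ^ 2 * (1 - x ^ 2) = c ^ 2 * Real.sin θ ^ 2 := by
    apply mul_left_cancel₀ (pow_ne_zero 2 hs.ne')
    linear_combination h2 + c ^ 2 * hx2
  have hsinsq : Real.sin (c * θ) ^ 2 < A ^ 2 :=
    (mul_lt_mul_iff_left₀ h1x0).mp (by rw [hAsq]; exact hsqkey)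
  have hsinA : Real.sin (c * θ) < A := lt_of_pow_lt_pow_left₀ 2 hA0.le hsinsq
  have hA2le : A ^ 2 ≤ 1 := by
    have h3 : A ^ 2 * (1 - x ^ 2) ≤ 1 * (1 - x ^ 2) := by
      rw [hAsq, one_mul, h1x]
      linarith [sq_nonneg (Real.cos θ)]
    exact le_of_mul_le_mul_right h3 h1x0
  have hA1 : A ≤ 1 := (pow_le_one_iff_of_nonneg hA0.le two_ne_zero).mp hA2le
  have harcsin : c * θ = arcsin (Real.sin (c * θ)) :=
    (Real.arcsin_sin (by linarith) (by linarith)).symm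
  calc c * θ = arcsin (Real.sin (c * θ)) := harcsin
    _ < A.arcsin := Real.strictMonoOn_arcsin
        ⟨by linarith [Real.neg_one_le_sin (c * θ)], Real.sin_le_one _⟩
        ⟨by linarith, hA1⟩ hsinA
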